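/- Let n ≥ 3 and c ∈ ZMod n, and let σ_c be the permutation of ZMod n given by σ_c(i) = c − i. Then every word w_1 w_2 ⋯ w_k over the alphabet {L, R, X} whose product in S_n equals σ_c contains at least n(n−1)/2 − ⌊n²/4⌋ occurrences of the letter X. -/

import Mathlib

/-- The alphabet of LRX generator letters. -/
inductive LRXLetter : Type
  | L | R | X
  deriving DecidableEq

/-- Evaluation of an LRX letter as a permutation of `ZMod n`:
`L : i ↦ i + 1`, `R : i ↦ i - 1`, `X = (0 1)`. -/
def LRXLetter.eval (n : ℕ) : LRXLetter → Equiv.Perm (ZMod n)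
  | .L => Equiv.addRight (1 : ZMod n)
  | .R => Equiv.subRight (1 : ZMod n)
  | .X => Equiv.swap (0 : ZMod n) 1



namespace LRXAux

lemma ediv_unique {N q r D : ℤ} (h0 : 0 ≤ r) (h1 : r < N) (hD : D = q * N + r) : D / N = q := by
  have hN : N ≠ 0 := by omega
  subst hD
  rw [add_comm, Int.add_mul_ediv_right _ _ hN, Int.ediv_eq_zero_of_lt h0 h1, zero_add]

lemma ediv_add_one {N D : ℤ} (hN : 0 < N) (h : ¬ N ∣ (D + 1)) : (D + 1) / N = D / N := by
  have h1 := Int.emod_nonneg D (by omega : N ≠ 0)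
  have h2 := Int.emod_lt_of_pos D hN
  have h3 := Int.mul_ediv_add_emod D N
  have h4 : D % N ≠ N - 1 := by
    intro he
    exact h ⟨D / N + 1, by linarith [he, h3, mul_add N (D/N) 1]⟩
  exact ediv_unique (q := D / N) (r := D % N + 1) (by omega) (by omega) (by linarith)

lemma ediv_sub_one {N D : ℤ} (hN : 0 < N) (h : ¬ N ∣ D) : (D - 1) / N = D / N := by
  have h1 := Int.emod_nonneg D (by omega : N ≠ 0)
  have h2 := Int.emod_lt_of_pos D hN
  have h3 := Int.mul_ediv_add_emod D N
  have h4 : D % N ≠ 0 := by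
    intro he
    exact h ⟨D / N, by linarith⟩
  exact ediv_unique (q := D / N) (r := D % N - 1) (by omega) (by omega) (by linarith)

lemma ediv_add_two {N D : ℤ} (hN : 1 < N) (h : N ∣ (D + 1)) : (D + 2) / N = D / N + 1 := by
  obtain ⟨k, hk⟩ := h
  have e1 : D / N = k - 1 :=
    ediv_unique (r := N - 1) (by omega) (by omega) (by linarith [mul_sub N k 1])
  have e2 : (D + 2) / N = k :=
    ediv_unique (r := 1) (by omega) (by omega) (by linarith [mul_comm N k])
  omega

lemma ediv_sub_two {N D : ℤ} (hN : 1 < N) (h : N ∣ (D - 1)) : (D - 2) / N = D / N - 1 := by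
  obtain ⟨k, hk⟩ := h
  have e1 : D / N = k :=
    ediv_unique (r := 1) (by omega) (by omega) (by linarith [mul_comm N k])
  have e2 : (D - 2) / N = k - 1 :=
    ediv_unique (r := N - 1) (by omega) (by omega) (by linarith [mul_sub N k 1])
  omega

lemma val_sub_int (n : ℕ) (hn : 3 ≤ n) (x y : ZMod n) :
    (((x - y).val : ℤ)) = if y.val ≤ x.val then (x.val : ℤ) - y.val
      else (x.val : ℤ) - y.val + n := by
  haveI : NeZero n := ⟨by omega⟩
  have hd : (n : ℤ) ∣ (((x - y).val : ℤ) - ((x.val : ℤ) - (y.val : ℤ))) := by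
    rw [← ZMod.intCast_zmod_eq_zero_iff_dvd]
    push_cast
    simp [ZMod.natCast_val, ZMod.cast_id]
  obtain ⟨k, hk⟩ := hd
  have b1 : (x - y).val < n := ZMod.val_lt _
  have b2 : x.val < n := ZMod.val_lt _
  have b3 : y.val < n := ZMod.val_lt _
  have hk0 : 0 ≤ k := by
    by_contra hc
    push_neg at hc
    have h5 : (n:ℤ) * k ≤ n * (-1) :=
      mul_le_mul_of_nonneg_left (by omega) (by positivity)
    linarith
  have hk1 : k ≤ 1 := by
    by_contra hc
    push_neg at hc
    have h5 : (n:ℤ) * 2 ≤ n * k :=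
      mul_le_mul_of_nonneg_left (by omega) (by positivity)
    linarith
  interval_cases k <;> split_ifs with h <;> omega



/-- Lifted integer position of token `a` after applying the word (rightmost letter first). -/
def pos (n : ℕ) : List LRXLetter → ZMod n → ℤ
  | [], a => (a.val : ℤ)
  | l :: t, a =>
    pos n t a +
      match l with
      | .L => 1
      | .R => -1
      | .X =>
        if ((t.map (LRXLetter.eval n)).prod a = 0) then 1
        else if ((t.map (LRXLetter.eval n)).prod a = 1) then -1 else 0

lemma pos_cast (n : ℕ) [NeZero n] (w : List LRXLetter) (a : ZMod n) :
    ((pos n w a : ℤ) : ZMod n) = (w.map (LRXLetter.eval n)).prod a := by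
  induction w with
  | nil => simp [pos, ZMod.natCast_val, ZMod.cast_id]
  | cons l t ih =>
    have hstep : ((l :: t).map (LRXLetter.eval n)).prod a
        = (LRXLetter.eval n l) (((t.map (LRXLetter.eval n)).prod) a) := by
      simp [Equiv.Perm.mul_apply]
    rw [hstep]
    cases l with
    | L =>
      simp only [pos, LRXLetter.eval, Equiv.coe_addRight]
      push_cast
      rw [ih]
    | R =>
      simp only [pos, LRXLetter.eval, Equiv.subRight_apply]
      push_cast
      rw [ih]
      ring
    | X =>
      by_cases h0 : (t.map (LRXLetter.eval n)).prod a = 0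
      · simp only [pos, LRXLetter.eval]
        rw [if_pos h0]
        push_cast
        rw [ih, h0, Equiv.swap_apply_left]
        ring
      · by_cases h1 : (t.map (LRXLetter.eval n)).prod a = 1
        · simp only [pos, LRXLetter.eval]
          rw [if_neg h0, if_pos h1]
          push_cast
          rw [ih, h1, Equiv.swap_apply_right]
          ring
        · simp only [pos, LRXLetter.eval]
          rw [if_neg h0, if_neg h1]
          push_cast
          rw [ih, Equiv.swap_apply_of_ne_of_ne h0 h1]
          ring

def crossAt (n : ℕ) (π : Equiv.Perm (ZMod n)) (a b : ZMod n) : Prop :=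
  (π a = 0 ∧ π b = 1) ∨ (π a = 1 ∧ π b = 0)

instance (n : ℕ) (π : Equiv.Perm (ZMod n)) (a b : ZMod n) : Decidable (crossAt n π a b) := by
  unfold crossAt; infer_instance

def crossCount (n : ℕ) (a b : ZMod n) : List LRXLetter → ℕ
  | [] => 0
  | l :: t => crossCount n a b t +
      (if l = LRXLetter.X ∧ crossAt n ((t.map (LRXLetter.eval n)).prod) a b then 1 else 0)

end LRXAux

namespace LRXAux

lemma cross_parity (n : ℕ) (hn : 3 ≤ n) (a b : ZMod n) (hab : a ≠ b) (w : List LRXLetter) :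
    ((pos n w a - pos n w b) / (n : ℤ)) % 2
      = ((pos n [] a - pos n [] b) / (n : ℤ) + (crossCount n a b w : ℤ)) % 2 := by
  haveI : NeZero n := ⟨by omega⟩
  haveI : Fact (1 < n) := ⟨by omega⟩
  induction w with
  | nil => simp [crossCount]
  | cons l t ih =>
    set π := (t.map (LRXLetter.eval n)).prod with hπ
    have hne : π a ≠ π b := fun h => hab (π.injective h)
    have hD : ((pos n t a - pos n t b : ℤ) : ZMod n) = π a - π b := by
      push_cast
      rw [pos_cast, pos_cast]
    have hnd : ¬ (n:ℤ) ∣ (pos n t a - pos n t b) := by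
      rw [← ZMod.intCast_zmod_eq_zero_iff_dvd, hD]
      exact sub_ne_zero.mpr hne
    cases l with
    | L =>
      have e1 : pos n (LRXLetter.L :: t) a - pos n (LRXLetter.L :: t) b
          = pos n t a - pos n t b := by simp [pos]
      have e2 : crossCount n a b (LRXLetter.L :: t) = crossCount n a b t := by
        simp [crossCount]
      rw [e1, e2]; exact ih
    | R =>
      have e1 : pos n (LRXLetter.R :: t) a - pos n (LRXLetter.R :: t) b
          = pos n t a - pos n t b := by simp [pos]
      have e2 : crossCount n a b (LRXLetter.R :: t) = crossCount n a b t := by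
        simp [crossCount]
      rw [e1, e2]; exact ih
    | X =>
      have e2 : crossCount n a b (LRXLetter.X :: t) = crossCount n a b t +
          (if crossAt n π a b then 1 else 0) := by simp [crossCount, hπ]
      have pa : pos n (LRXLetter.X :: t) a = pos n t a +
          (if π a = 0 then 1 else if π a = 1 then -1 else 0) := by simp [pos, hπ]
      have pb : pos n (LRXLetter.X :: t) b = pos n t b +
          (if π b = 0 then 1 else if π b = 1 then -1 else 0) := by simp [pos, hπ]
      by_cases ha0 : π a = 0
      · have hb0 : π b ≠ 0 := fun h => hne (ha0.trans h.symm)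
        have ha1 : π a ≠ 1 := by rw [ha0]; exact zero_ne_one
        by_cases hb1 : π b = 1
        · -- crossing : D ↦ D + 2
          have ed : pos n (LRXLetter.X :: t) a - pos n (LRXLetter.X :: t) b
              = (pos n t a - pos n t b) + 2 := by
            rw [pa, pb, if_pos ha0, if_neg hb0, if_pos hb1]; ring
          have hc : ((pos n t a - pos n t b + 1 : ℤ) : ZMod n) = 0 := by
            push_cast
            rw [pos_cast, pos_cast, ha0, hb1]
            ring
          have hdvd : (n:ℤ) ∣ (pos n t a - pos n t b + 1) :=
            (ZMod.intCast_zmod_eq_zero_iff_dvd _ n).mp hc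
          rw [ed, ediv_add_two (by omega) hdvd, e2, if_pos (show crossAt n π a b from Or.inl ⟨ha0, hb1⟩)]
          push_cast
          omega
        · -- D ↦ D + 1, no crossing
          have ed : pos n (LRXLetter.X :: t) a - pos n (LRXLetter.X :: t) b
              = (pos n t a - pos n t b) + 1 := by
            rw [pa, pb, if_pos ha0, if_neg hb0, if_neg hb1]; ring
          have hc : ((pos n t a - pos n t b + 1 : ℤ) : ZMod n) = 1 - π b := by
            push_cast
            rw [pos_cast, pos_cast, ha0]
            ring
          have hnd1 : ¬ (n:ℤ) ∣ (pos n t a - pos n t b + 1) := by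
            rw [← ZMod.intCast_zmod_eq_zero_iff_dvd, hc]
            exact sub_ne_zero.mpr (Ne.symm hb1)
          have hcr : ¬ crossAt n π a b := by
            rintro (⟨-, h⟩ | ⟨h, -⟩)
            exacts [hb1 h, ha1 h]
          rw [ed, ediv_add_one (by omega) hnd1, e2, if_neg hcr]
          push_cast
          omega
      · by_cases ha1 : π a = 1
        · have hb1 : π b ≠ 1 := fun h => hne (ha1.trans h.symm)
          by_cases hb0 : π b = 0
          · -- crossing : D ↦ D - 2
            have ed : pos n (LRXLetter.X :: t) a - pos n (LRXLetter.X :: t) b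
                = (pos n t a - pos n t b) - 2 := by
              rw [pa, pb, if_neg ha0, if_pos ha1, if_pos hb0]; ring
            have hc : ((pos n t a - pos n t b - 1 : ℤ) : ZMod n) = 0 := by
              push_cast
              rw [pos_cast, pos_cast, ha1, hb0]
              ring
            have hdvd : (n:ℤ) ∣ (pos n t a - pos n t b - 1) :=
              (ZMod.intCast_zmod_eq_zero_iff_dvd _ n).mp hc
            rw [ed, ediv_sub_two (by omega) hdvd, e2, if_pos (show crossAt n π a b from Or.inr ⟨ha1, hb0⟩)]
            push_cast
            omega
          · -- D ↦ D - 1, no crossing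
            have ed : pos n (LRXLetter.X :: t) a - pos n (LRXLetter.X :: t) b
                = (pos n t a - pos n t b) - 1 := by
              rw [pa, pb, if_neg ha0, if_pos ha1, if_neg hb0, if_neg hb1]; ring
            have hcr : ¬ crossAt n π a b := by
              rintro (⟨h, -⟩ | ⟨-, h⟩)
              exacts [ha0 h, hb0 h]
            rw [ed, ediv_sub_one (by omega) hnd, e2, if_neg hcr]
            push_cast
            omega
        · -- a does not move
          have hcr : ¬ crossAt n π a b := by
            rintro (⟨h, -⟩ | ⟨h, -⟩)
            exacts [ha0 h, ha1 h]
          by_cases hb0 : π b = 0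
          · -- D ↦ D - 1
            have ed : pos n (LRXLetter.X :: t) a - pos n (LRXLetter.X :: t) b
                = (pos n t a - pos n t b) - 1 := by
              rw [pa, pb, if_neg ha0, if_neg ha1, if_pos hb0]; ring
            rw [ed, ediv_sub_one (by omega) hnd, e2, if_neg hcr]
            push_cast
            omega
          · by_cases hb1 : π b = 1
            · -- D ↦ D + 1
              have ed : pos n (LRXLetter.X :: t) a - pos n (LRXLetter.X :: t) b
                  = (pos n t a - pos n t b) + 1 := by
                rw [pa, pb, if_neg ha0, if_neg ha1, if_neg hb0, if_pos hb1]; ring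
              have hc : ((pos n t a - pos n t b + 1 : ℤ) : ZMod n) = π a := by
                push_cast
                rw [pos_cast, pos_cast, hb1]
                ring
              have hnd1 : ¬ (n:ℤ) ∣ (pos n t a - pos n t b + 1) := by
                rw [← ZMod.intCast_zmod_eq_zero_iff_dvd, hc]
                exact ha0
              rw [ed, ediv_add_one (by omega) hnd1, e2, if_neg hcr]
              push_cast
              omega
            · -- D unchanged
              have ed : pos n (LRXLetter.X :: t) a - pos n (LRXLetter.X :: t) b
                  = pos n t a - pos n t b := by
                rw [pa, pb, if_neg ha0, if_neg ha1, if_neg hb0, if_neg hb1]; ring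
              rw [ed, e2, if_neg hcr]
              push_cast
              omega


lemma sum_cross (n : ℕ) [NeZero n] (hn : 3 ≤ n) (w : List LRXLetter) :
    ∑ p ∈ Finset.univ.offDiag, crossCount n p.1 p.2 w = 2 * w.count LRXLetter.X := by
  haveI : Fact (1 < n) := ⟨by omega⟩
  induction w with
  | nil => simp [crossCount]
  | cons l t ih =>
    have hsplit : ∀ p : ZMod n × ZMod n,
        crossCount n p.1 p.2 (l :: t) = crossCount n p.1 p.2 t +
          (if l = LRXLetter.X ∧ crossAt n ((t.map (LRXLetter.eval n)).prod) p.1 p.2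
            then 1 else 0) := by
      intro p; simp [crossCount]
    rw [Finset.sum_congr rfl (fun p _ => hsplit p), Finset.sum_add_distrib, ih]
    set π := (t.map (LRXLetter.eval n)).prod with hπ
    cases l with
    | L => simp [List.count_cons]
    | R => simp [List.count_cons]
    | X =>
      have h2 : ∑ p ∈ Finset.univ.offDiag,
          (if (LRXLetter.X = LRXLetter.X ∧ crossAt n π p.1 p.2) then 1 else 0) = 2 := by
        rw [← Finset.card_filter]
        have huv : π.symm 0 ≠ π.symm 1 := by
          intro h
          have h01 : (0 : ZMod n) = 1 := by
            have := congrArg π h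
            simpa using this
          exact zero_ne_one h01
        have hset : Finset.univ.offDiag.filter
            (fun p : ZMod n × ZMod n => LRXLetter.X = LRXLetter.X ∧ crossAt n π p.1 p.2)
            = {(π.symm 0, π.symm 1), (π.symm 1, π.symm 0)} := by
          ext ⟨x, y⟩
          simp only [Finset.mem_filter, Finset.mem_offDiag, Finset.mem_univ, true_and,
            crossAt, Finset.mem_insert, Finset.mem_singleton, Prod.mk.injEq]
          constructor
          · rintro ⟨-, (⟨hx, hy⟩ | ⟨hx, hy⟩)⟩
            · left
              exact ⟨(Equiv.eq_symm_apply π).mpr hx, (Equiv.eq_symm_apply π).mpr hy⟩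
            · right
              exact ⟨(Equiv.eq_symm_apply π).mpr hx, (Equiv.eq_symm_apply π).mpr hy⟩
          · rintro (⟨rfl, rfl⟩ | ⟨rfl, rfl⟩)
            · exact ⟨huv, Or.inl ⟨by simp, by simp⟩⟩
            · exact ⟨huv.symm, Or.inr ⟨by simp, by simp⟩⟩
        rw [hset]
        rw [Finset.card_insert_of_notMem (by
          simp only [Finset.mem_singleton, Prod.mk.injEq]
          rintro ⟨h, -⟩
          exact huv h), Finset.card_singleton]
      rw [h2]
      simp [List.count_cons]
      ring

end LRXAux

open LRXAux

/-- For `n ≥ 3` and `c ∈ ZMod n`, every word over the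
alphabet `{L, R, X}` whose product in `S_n` equals the reflection
`σ_c : i ↦ c - i` contains at least `n(n-1)/2 - ⌊n²/4⌋` occurrences of the
letter `X`. -/
theorem reflection_word_many_X (n : ℕ) (hn : 3 ≤ n) (c : ZMod n)
    (w : List LRXLetter)
    (hw : (w.map (LRXLetter.eval n)).prod = Equiv.subLeft c) :
    n * (n - 1) / 2 - n ^ 2 / 4 ≤ w.count LRXLetter.X := by
  haveI : NeZero n := ⟨by omega⟩
  haveI : Fact (1 < n) := ⟨by omega⟩
  have hdvd : ∀ a : ZMod n, (n:ℤ) ∣ (pos n w a - ((c - a).val : ℤ)) := by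
    intro a
    rw [← ZMod.intCast_zmod_eq_zero_iff_dvd]
    push_cast
    rw [pos_cast, hw]
    simp [Equiv.subLeft_apply, ZMod.natCast_val, ZMod.cast_id]
  set tf : ZMod n → ℤ := fun a => (pos n w a - ((c - a).val : ℤ)) / n with htf
  have htq : ∀ a, pos n w a = ((c - a).val : ℤ) + n * tf a := by
    intro a
    have h := Int.ediv_mul_cancel (hdvd a)
    simp only [htf]
    linarith [h]
  set hfun : ZMod n → Bool :=
    fun a => decide ((tf a + if a.val ≤ c.val then 0 else 1) % 2 = 0) with hhf
  have hodd : ∀ a b : ZMod n, a ≠ b → hfun a = hfun b →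
      crossCount n a b w % 2 = 1 := by
    intro a b hab hh
    have hcp := cross_parity n hn a b hab w
    have hvne : a.val ≠ b.val := fun h => hab (ZMod.val_injective n h)
    have hABne : (c - a).val ≠ (c - b).val := by
      intro h
      have h2 : c - a = c - b := ZMod.val_injective n h
      exact hab (sub_right_injective h2)
    have hva : a.val < n := ZMod.val_lt a
    have hvb : b.val < n := ZMod.val_lt b
    have hvA : (c - a).val < n := ZMod.val_lt _
    have hvB : (c - b).val < n := ZMod.val_lt _
    have hvne' : ((a.val : ℤ)) ≠ ((b.val : ℤ)) := by exact_mod_cast hvne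
    have hABne' : (((c - a).val : ℤ)) ≠ (((c - b).val : ℤ)) := by exact_mod_cast hABne
    have hva' : ((a.val : ℤ)) < n := by exact_mod_cast hva
    have hvb' : ((b.val : ℤ)) < n := by exact_mod_cast hvb
    have hvA' : (((c - a).val : ℤ)) < n := by exact_mod_cast hvA
    have hvB' : (((c - b).val : ℤ)) < n := by exact_mod_cast hvB
    have hF0 : (pos n [] a - pos n [] b) / (n:ℤ) =
        if (b.val : ℤ) < (a.val : ℤ) then 0 else -1 := by
      simp only [pos]
      split_ifs with h
      · exact ediv_unique (q := 0) (r := (a.val : ℤ) - b.val)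
          (by omega) (by omega) (by ring)
      · exact ediv_unique (q := -1) (r := (a.val : ℤ) - b.val + n)
          (by omega) (by omega) (by ring)
    have hFw : (pos n w a - pos n w b) / (n:ℤ) = (tf a - tf b) +
        (if ((c - b).val : ℤ) < ((c - a).val : ℤ) then 0 else -1) := by
      rw [htq a, htq b]
      split_ifs with h
      · rw [add_zero]
        exact ediv_unique (q := tf a - tf b)
          (r := ((c - a).val : ℤ) - ((c - b).val : ℤ))
          (by omega) (by omega) (by ring)
      · exact ediv_unique (q := tf a - tf b + (-1))
          (r := ((c - a).val : ℤ) - ((c - b).val : ℤ) + n)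
          (by omega) (by omega) (by ring)
    rw [hF0, hFw] at hcp
    have hh' : ((tf a + if a.val ≤ c.val then (0:ℤ) else 1) % 2 = 0)
        ↔ ((tf b + if b.val ≤ c.val then (0:ℤ) else 1) % 2 = 0) := by
      simp only [hhf] at hh
      exact decide_eq_decide.mp hh
    have hα := val_sub_int n hn c a
    have hβ := val_sub_int n hn c b
    have hvc : c.val < n := ZMod.val_lt c
    split_ifs at hcp hh' hα hβ <;> omega
  -- counting
  set S := Finset.univ.offDiag.filter
    (fun p : ZMod n × ZMod n => hfun p.1 = hfun p.2) with hSdef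
  set m := (Finset.univ.filter (fun x : ZMod n => hfun x = true)).card with hm
  set k := (Finset.univ.filter (fun x : ZMod n => hfun x = false)).card with hk
  have hmk : m + k = n := by
    rw [hm, hk]
    have h2 : (Finset.univ.filter (fun x : ZMod n => hfun x = false))
        = (Finset.univ.filter (fun x : ZMod n => ¬ (hfun x = true))) := by
      apply Finset.filter_congr
      intro x _
      simp
    rw [h2, Finset.card_filter_add_card_filter_not, Finset.card_univ, ZMod.card]
  have hdisj : Disjoint
      ((Finset.univ.filter (fun x : ZMod n => hfun x = true)).offDiag)
      ((Finset.univ.filter (fun x : ZMod n => hfun x = false)).offDiag) := by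
    rw [Finset.disjoint_left]
    rintro ⟨x, y⟩ hx hy
    have h1 := (Finset.mem_offDiag.mp hx).1
    have h2 := (Finset.mem_offDiag.mp hy).1
    simp only [Finset.mem_filter] at h1 h2
    rw [h1.2] at h2
    exact absurd h2.2 (by simp)
  have hunion : S
      = ((Finset.univ.filter (fun x : ZMod n => hfun x = true)).offDiag)
        ∪ ((Finset.univ.filter (fun x : ZMod n => hfun x = false)).offDiag) := by
    rw [hSdef]
    ext ⟨x, y⟩
    simp only [Finset.mem_filter, Finset.mem_offDiag, Finset.mem_union, Finset.mem_univ,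
      true_and]
    constructor
    · rintro ⟨hxy, heq⟩
      cases hx : hfun x with
      | false =>
        right
        exact ⟨rfl, by rw [← heq, hx], hxy⟩
      | true =>
        left
        exact ⟨rfl, by rw [← heq, hx], hxy⟩
    · rintro (⟨h1, h2, h3⟩ | ⟨h1, h2, h3⟩) <;> exact ⟨h3, by rw [h1, h2]⟩
  have hScard : S.card = (m * m - m) + (k * k - k) := by
    rw [hunion, Finset.card_union_of_disjoint hdisj, Finset.offDiag_card,
      Finset.offDiag_card]
  have hsum := sum_cross n hn w
  have hle : S.card ≤ ∑ p ∈ Finset.univ.offDiag, crossCount n p.1 p.2 w := by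
    rw [hSdef, Finset.card_filter]
    apply Finset.sum_le_sum
    intro p hp
    split_ifs with h
    · have hne : p.1 ≠ p.2 := (Finset.mem_offDiag.mp hp).2.2
      have := hodd p.1 p.2 hne h
      omega
    · exact Nat.zero_le _
  have h2c : S.card ≤ 2 * w.count LRXLetter.X := by rw [← hsum]; exact hle
  -- arithmetic
  have hmm : m ≤ m * m := by
    rcases Nat.eq_zero_or_pos m with h | h
    · simp [h]
    · exact Nat.le_mul_of_pos_left m h
  have hkk : k ≤ k * k := by
    rcases Nat.eq_zero_or_pos k with h | h
    · simp [h]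
    · exact Nat.le_mul_of_pos_left k h
  have hq4 : (4:ℤ) * (m * k) ≤ (n:ℤ) * n := by
    have hnn : (n:ℤ) = (m:ℤ) + k := by exact_mod_cast hmk.symm
    nlinarith [sq_nonneg ((m:ℤ) - k)]
  have hmk4 : m * k ≤ n ^ 2 / 4 := by
    rw [Nat.le_div_iff_mul_le (by norm_num), pow_two]
    have h : ((m:ℤ) * k) * 4 ≤ (n:ℤ) * n := by linarith
    exact_mod_cast h
  -- final
  set q := n ^ 2 / 4 with hq
  set X := w.count LRXLetter.X with hX
  have hkey : n * (n - 1) ≤ 2 * X + 2 * q := by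
    have hcast : ((n * (n - 1) : ℕ) : ℤ) = (n:ℤ) * n - n := by
      push_cast [Nat.cast_sub (by omega : 1 ≤ n)]
      ring
    have hSz : ((S.card : ℕ) : ℤ) = (m:ℤ) * m - m + ((k:ℤ) * k - k) := by
      rw [hScard]
      push_cast [Nat.cast_sub hmm, Nat.cast_sub hkk]
      ring
    have hnnz : (n:ℤ) * n = (m:ℤ) * m + 2 * ((m:ℤ) * k) + (k:ℤ) * k := by
      have : (n:ℤ) = (m:ℤ) + k := by exact_mod_cast hmk.symm
      rw [this]; ring
    have h2cz : ((S.card : ℕ) : ℤ) ≤ 2 * (X:ℤ) := by exact_mod_cast h2c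
    have hqz : ((m * k : ℕ) : ℤ) ≤ ((q : ℕ) : ℤ) := by exact_mod_cast hmk4
    have : ((n * (n - 1) : ℕ) : ℤ) ≤ 2 * (X:ℤ) + 2 * (q:ℤ) := by
      rw [hcast]
      push_cast at hqz
      linarith [hSz, hnnz, h2cz]
    exact_mod_cast this
  have hev : 2 * (n * (n - 1) / 2) = n * (n - 1) := by
    have : Even (n * (n - 1)) := by
      rcases Nat.even_or_odd n with h | h
      · exact h.mul_right _
      · have : Even (n - 1) := by
          rcases h with ⟨j, hj⟩
          exact ⟨j, by omega⟩
        exact this.mul_left _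
    rcases this with ⟨r, hr⟩
    rw [hr]
    omega
  have h1 : n * (n - 1) / 2 ≤ X + q := by
    have h2 : 2 * (n * (n - 1) / 2) ≤ 2 * (X + q) := by
      rw [hev]
      linarith [hkey]
    exact Nat.le_of_mul_le_mul_left h2 (by norm_num)
  exact tsub_le_iff_right.mpr (by linarith [h1])
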